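/- If a GDoF tuple (d_1,...,d_K) with all d_k > 0 is achievable via the polyhedral TIN scheme in a K-user regular interference channel (i.e., all cycles of its potential graph have nonnegative length), then the shortest path length l_{k,dst} from u to v_k equals 0 for at least one k ∈ ⟨K⟩. -/

import Mathlib

/-- Concatenation of two walks given as `ℕ → V` functions, with a sum formula. -/
lemma walk_concat {V : Type*} (len : V → V → ℝ) (w1 w2 : ℕ → V) (n1 n2 : ℕ)
    (h : w1 n1 = w2 0) :
    ∃ w : ℕ → V, w 0 = w1 0 ∧ w (n1 + n2) = w2 n2 ∧
      ∑ j ∈ Finset.range (n1 + n2), len (w j) (w (j + 1)) =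
        (∑ j ∈ Finset.range n1, len (w1 j) (w1 (j + 1))) +
          ∑ j ∈ Finset.range n2, len (w2 j) (w2 (j + 1)) := by
  refine ⟨fun j => if j < n1 then w1 j else w2 (j - n1), ?_, ?_, ?_⟩
  · rcases Nat.eq_zero_or_pos n1 with h0 | h0
    · subst h0; simpa using h.symm
    · simp [h0]
  · have : ¬ (n1 + n2 < n1) := by omega
    simp [this]
  · rw [Finset.sum_range_add]
    congr 1
    · refine Finset.sum_congr rfl fun j hj => ?_
      have hj' : j < n1 := Finset.mem_range.mp hj
      rcases lt_or_eq_of_le (Nat.succ_le_of_lt hj') with h1 | h1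
      · simp [hj', h1]
      · have h2 : ¬ (j + 1 < n1) := by omega
        simp only [if_pos hj', if_neg h2]
        rw [show j + 1 - n1 = 0 by omega, ← h, show n1 = j + 1 by omega]
    · refine Finset.sum_congr rfl fun j hj => ?_
      have h1 : ¬ (n1 + j < n1) := by omega
      have h2 : ¬ (n1 + j + 1 < n1) := by omega
      simp only [if_neg h1, if_neg h2]
      rw [show n1 + j - n1 = j by omega, show n1 + j + 1 - n1 = j + 1 by omega]

theorem some_user_full_power
    (K : ℕ) (hK : 1 ≤ K) (α : Fin K → Fin K → ℝ) (d : Fin K → ℝ) (hd : ∀ k, 0 < d k)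
    (len : (Fin K ⊕ Unit) → (Fin K ⊕ Unit) → ℝ)
    (hlen0 : ∀ v, len v v = 0)
    (hlen1 : ∀ k j : Fin K, k ≠ j → len (.inl k) (.inl j) = (α k k - α k j) - d k)
    (hlen2 : ∀ k : Fin K, len (.inl k) (.inr ()) = α k k - d k)
    (hlen3 : ∀ k : Fin K, len (.inr ()) (.inl k) = 0)
    (hcyc : ∀ (m : ℕ) (c : Fin (m + 1) → (Fin K ⊕ Unit)), c 0 = c (Fin.last m) →
      0 ≤ ∑ i : Fin m, len (c i.castSucc) (c i.succ))
    (r : Fin K → ℝ)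
    (hr : ∀ k : Fin K, r k = sInf {x : ℝ | ∃ (m : ℕ) (c : Fin (m + 1) → (Fin K ⊕ Unit)),
      c 0 = .inr () ∧ c (Fin.last m) = .inl k ∧
      x = ∑ i : Fin m, len (c i.castSucc) (c i.succ)}) :
    ∃ k : Fin K, r k = 0 := by
  classical
  set S : Fin K → Set ℝ := fun k => {x : ℝ | ∃ (m : ℕ) (c : Fin (m + 1) → (Fin K ⊕ Unit)),
      c 0 = .inr () ∧ c (Fin.last m) = .inl k ∧
      x = ∑ i : Fin m, len (c i.castSucc) (c i.succ)} with hS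
  have hrS : ∀ k : Fin K, r k = sInf (S k) := by
    intro k; simp only [hS]; exact hr k
  -- cycle condition for ℕ-indexed walks
  have cyc' : ∀ (m : ℕ) (c : ℕ → Fin K ⊕ Unit), c 0 = c m →
      0 ≤ ∑ j ∈ Finset.range m, len (c j) (c (j + 1)) := by
    intro m c h
    have h2 := hcyc m (fun i => c i.val) (by simpa using h)
    rw [← Fin.sum_univ_eq_sum_range (fun j => len (c j) (c (j + 1))) m]
    simpa using h2
  -- 0 belongs to each S k
  have h0mem : ∀ k : Fin K, (0 : ℝ) ∈ S k := by
    intro k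
    refine ⟨1, ![Sum.inr (), Sum.inl k], rfl, rfl, ?_⟩
    simp [hlen3 k]
  by_contra hcon
  push_neg at hcon
  -- all sets bounded below
  have hbdd : ∀ k, BddBelow (S k) := by
    intro k
    by_contra hnb
    exact hcon k ((hrS k).trans (Real.sInf_of_not_bddBelow hnb))
  -- each r k < 0
  have hrneg : ∀ k, r k < 0 := by
    intro k
    rcases lt_or_eq_of_le (csInf_le (hbdd k) (h0mem k)) with h | h
    · rwa [hrS k]
    · exact absurd ((hrS k).trans h) (hcon k)
  -- extract a negative walk from u to v_k
  have hneg : ∀ k : Fin K, ∃ x ∈ S k, x < 0 := by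
    intro k
    by_contra hx
    push_neg at hx
    have h1 : (0 : ℝ) ≤ sInf (S k) := le_csInf ⟨0, h0mem k⟩ hx
    rw [← hrS k] at h1
    exact absurd h1 (not_le.mpr (hrneg k))
  -- for each k obtain a negative ℕ-walk from some v-vertex to v_k
  have hstrip : ∀ k : Fin K, ∃ (g : Fin K) (n : ℕ) (w : ℕ → Fin K ⊕ Unit),
      w 0 = Sum.inl g ∧ w n = Sum.inl k ∧
      (∑ j ∈ Finset.range n, len (w j) (w (j + 1))) < 0 := by
    intro k
    obtain ⟨x, hxS, hxneg⟩ := hneg k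
    obtain ⟨m, c, hc0, hcm, hxsum⟩ := hxS
    -- convert to ℕ-indexed walk
    set c' : ℕ → Fin K ⊕ Unit :=
      fun n => if h : n ≤ m then c ⟨n, Nat.lt_succ_of_le h⟩ else c (Fin.last m) with hc'
    have hcv : ∀ n (h : n ≤ m), c' n = c ⟨n, Nat.lt_succ_of_le h⟩ := by
      intro n h; simp [hc', h]
    have hc'0 : c' 0 = Sum.inr () := by
      rw [hcv 0 (Nat.zero_le m)]; exact hc0
    have hc'm : c' m = Sum.inl k := by
      rw [hcv m le_rfl]; exact hcm
    have hsum : ∑ j ∈ Finset.range m, len (c' j) (c' (j + 1)) = x := by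
      rw [hxsum, ← Fin.sum_univ_eq_sum_range (fun j => len (c' j) (c' (j + 1))) m]
      refine Finset.sum_congr rfl fun i _ => ?_
      have h1 : c' i.val = c i.castSucc := by
        rw [hcv i.val (le_of_lt i.isLt)]; congr 1
      have h2 : c' (i.val + 1) = c i.succ := by
        rw [hcv (i.val + 1) i.isLt]; congr 1
      simp only [h1, h2]
    -- find the last visit of u
    set P : ℕ → Prop := fun n => c' n = Sum.inr () with hP
    set i := Nat.findGreatest P m with hi
    have hPi : P i := Nat.findGreatest_spec (Nat.zero_le m) hc'0
    have him : i ≤ m := Nat.findGreatest_le m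
    have hiltm : i < m := by
      rcases lt_or_eq_of_le him with h | h
      · exact h
      · exfalso
        have : c' i = Sum.inr () := hPi
        rw [h, hc'm] at this
        cases this
    have hnotP : ¬ P (i + 1) := Nat.findGreatest_is_greatest (Nat.lt_succ_self i) hiltm
    obtain ⟨g, hg⟩ : ∃ g : Fin K, c' (i + 1) = Sum.inl g := by
      rcases h' : c' (i + 1) with g | u
      · exact ⟨g, rfl⟩
      · exact absurd h' hnotP
    -- split the sum at i + 1
    have hsplit : (∑ j ∈ Finset.range m, len (c' j) (c' (j + 1))) =
        (∑ j ∈ Finset.range (i + 1), len (c' j) (c' (j + 1))) +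
        ∑ j ∈ Finset.range (m - i - 1), len (c' (i + 1 + j)) (c' (i + 1 + j + 1)) := by
      have h := Finset.sum_range_add (fun j => len (c' j) (c' (j + 1))) (i + 1) (m - i - 1)
      rw [show i + 1 + (m - i - 1) = m by omega] at h
      simpa using h
    have hpre : 0 ≤ ∑ j ∈ Finset.range (i + 1), len (c' j) (c' (j + 1)) := by
      rw [Finset.sum_range_succ]
      have h1 : 0 ≤ ∑ j ∈ Finset.range i, len (c' j) (c' (j + 1)) := by
        refine cyc' i c' ?_
        rw [hc'0]
        exact hPi.symm
      have h2 : len (c' i) (c' (i + 1)) = 0 := by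
        have hPi' : c' i = Sum.inr () := hPi
        rw [hPi', hg]; exact hlen3 g
      linarith
    refine ⟨g, m - i - 1, fun j => c' (i + 1 + j), hg, ?_, ?_⟩
    · show c' (i + 1 + (m - i - 1)) = Sum.inl k
      rw [show i + 1 + (m - i - 1) = m by omega]
      exact hc'm
    · show (∑ j ∈ Finset.range (m - i - 1), len (c' (i + 1 + j)) (c' (i + 1 + j + 1))) < 0
      linarith [hsum, hsplit, hxneg, hpre]
  choose g n w hw0 hwn hws using hstrip
  -- chain walks along iterates of g
  have key : ∀ (p : ℕ) (a : Fin K), ∃ (N : ℕ) (W : ℕ → Fin K ⊕ Unit),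
      W 0 = Sum.inl (g^[p] a) ∧ W N = Sum.inl a ∧
      (∑ j ∈ Finset.range N, len (W j) (W (j + 1))) ≤ 0 ∧
      (0 < p → (∑ j ∈ Finset.range N, len (W j) (W (j + 1))) < 0) := by
    intro p
    induction p with
    | zero =>
      intro a
      exact ⟨0, fun _ => Sum.inl a, rfl, rfl, by simp, by simp⟩
    | succ p ih =>
      intro a
      obtain ⟨N, W, hW0, hWN, hWle, _⟩ := ih a
      obtain ⟨W', hW'0, hW'N, hW'sum⟩ :=
        walk_concat len (w (g^[p] a)) W (n (g^[p] a)) N (by rw [hwn (g^[p] a), hW0])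
      refine ⟨n (g^[p] a) + N, W', ?_, by rw [hW'N, hWN], ?_, fun _ => ?_⟩
      · rw [hW'0, hw0 (g^[p] a), Function.iterate_succ_apply']
      · rw [hW'sum]; linarith [hws (g^[p] a)]
      · rw [hW'sum]; linarith [hws (g^[p] a)]
  -- pigeonhole on iterates
  have k0 : Fin K := ⟨0, hK⟩
  have main : ∀ s1 s2 : ℕ, s1 < s2 → g^[s1] k0 = g^[s2] k0 → False := by
    intro s1 s2 hlt he
    have hpa : g^[s2 - s1] (g^[s1] k0) = g^[s1] k0 := by
      rw [← Function.iterate_add_apply, show s2 - s1 + s1 = s2 by omega, ← he]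
    obtain ⟨N, W, hW0, hWN, _, hWlt⟩ := key (s2 - s1) (g^[s1] k0)
    have hcl : W 0 = W N := by rw [hW0, hWN, hpa]
    have h1 := cyc' N W hcl
    have h2 := hWlt (by omega)
    linarith
  obtain ⟨t1, t2, hne, heq⟩ := Fintype.exists_ne_map_eq_of_card_lt
    (fun t : Fin (K + 1) => g^[t.val] k0) (by simp)
  rcases Ne.lt_or_gt hne with h | h
  · exact main t1.val t2.val h heq
  · exact main t2.val t1.val h heq.symm
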